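/- The set J_F π_F(A_F) J_F equals the set of operators on H_F of the form ξ ↦ E_u ξ diag(λ, m) + E_l ξ diag(λ, conj λ, q), where λ ∈ ℂ, q ∈ M₂(ℂ) is quaternionic, m ∈ M₃(ℂ), E_u = diag(1₄, 0₄) ∈ M₈(ℂ) and E_l = diag(0₄, 1₄) ∈ M₈(ℂ) act by left multiplication, diag(λ, m) ∈ M₄(ℂ) is block-diagonal with blocks λ (size 1) and m (size 3), and diag(λ, conj λ, q) ∈ M₄(ℂ) is block-diagonal with blocks λ, conj λ (size 1 each) and q (size 2), acting by right multiplication. -/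

import Mathlib

open Matrix ComplexConjugate

noncomputable section

/-- The internal Hilbert space of the Standard Model (one generation):
8×4 complex matrices. -/
abbrev HF : Type := Matrix (Fin 8) (Fin 4) ℂ

abbrev M8 : Type := Matrix (Fin 8) (Fin 8) ℂ
abbrev M4 : Type := Matrix (Fin 4) (Fin 4) ℂ
abbrev M3 : Type := Matrix (Fin 3) (Fin 3) ℂ
abbrev M2 : Type := Matrix (Fin 2) (Fin 2) ℂ

/-- A 2×2 complex matrix is of quaternionic form. -/
def IsQuat (q : M2) : Prop :=
  ∃ α β : ℂ, q 0 0 = α ∧ q 0 1 = β ∧ q 1 0 = -conj β ∧ q 1 1 = conj α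

/-- The block-diagonal matrix with diagonal blocks λ, conj λ, q, λ, m
(of sizes 1,1,2,1,3). -/
def Pmat (l : ℂ) (q : M2) (m : M3) : M8 :=
  Matrix.of fun i j =>
    if i = 0 ∧ j = 0 then l
    else if i = 1 ∧ j = 1 then conj l
    else if h : 2 ≤ (i : ℕ) ∧ (i : ℕ) < 4 ∧ 2 ≤ (j : ℕ) ∧ (j : ℕ) < 4 then
      q ⟨(i : ℕ) - 2, by omega⟩ ⟨(j : ℕ) - 2, by omega⟩
    else if i = 4 ∧ j = 4 then l
    else if h : 5 ≤ (i : ℕ) ∧ 5 ≤ (j : ℕ) then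
      m ⟨(i : ℕ) - 5, by have := i.isLt; omega⟩ ⟨(j : ℕ) - 5, by have := j.isLt; omega⟩
    else 0

/-- The operator ξ ↦ A ξ B on H_F. -/
def lrOp (A : M8) (B : M4) : Module.End ℂ HF where
  toFun ξ := A * ξ * B
  map_add' x y := by simp [Matrix.mul_add, Matrix.add_mul]
  map_smul' c x := by simp [Matrix.mul_smul, Matrix.smul_mul]

/-- Left multiplication by an 8×8 matrix as an operator on H_F. -/
def lmul (A : M8) : Module.End ℂ HF where
  toFun ξ := A * ξ
  map_add' x y := Matrix.mul_add A x y
  map_smul' c x := by simp [Matrix.mul_smul]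

/-- The representation π_F of A_F = ℂ ⊕ ℍ ⊕ M₃(ℂ) on H_F. -/
def piF (l : ℂ) (q : M2) (m : M3) : Module.End ℂ HF := lmul (Pmat l q m)

/-- The image π_F(A_F) as a set of operators. -/
def piFSet : Set (Module.End ℂ HF) := { T | ∃ l q m, IsQuat q ∧ T = piF l q m }

/-- The real structure J_F: ξ = [v₁; v₂] ↦ [v₂*; v₁*]. -/
def JF (ξ : HF) : HF :=
  Matrix.of fun i j =>
    if h : (i : ℕ) < 4 then
      conj (ξ ⟨(j : ℕ) + 4, by have := j.isLt; omega⟩ ⟨(i : ℕ), h⟩)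
    else
      conj (ξ ⟨(j : ℕ), by have := j.isLt; omega⟩ ⟨(i : ℕ) - 4, by have := i.isLt; omega⟩)

lemma JF_add (x y : HF) : JF (x + y) = JF x + JF y := by
  funext i j
  by_cases h : (i : ℕ) < 4 <;> simp [JF, h]

lemma JF_smul (c : ℂ) (x : HF) : JF (c • x) = conj c • JF x := by
  funext i j
  by_cases h : (i : ℕ) < 4 <;> simp [JF, h]

/-- Conjugation T ↦ J_F ∘ T ∘ J_F, a ℂ-linear operator on H_F. -/
def conjByJ (T : Module.End ℂ HF) : Module.End ℂ HF where
  toFun ξ := JF (T (JF ξ))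
  map_add' x y := by
    show JF (T (JF (x + y))) = JF (T (JF x)) + JF (T (JF y))
    rw [JF_add, map_add, JF_add]
  map_smul' c x := by
    show JF (T (JF (c • x))) = c • JF (T (JF x))
    rw [JF_smul, _root_.map_smul, JF_smul, Complex.conj_conj]

abbrev E8 (i j : Fin 8) : M8 := Matrix.single i j 1
abbrev E4 (i j : Fin 4) : M4 := Matrix.single i j 1

def M1mat (Yν Ye YR : ℂ) : M8 :=
  conj Yν • E8 0 2 + conj Ye • E8 1 3 + Yν • E8 2 0 + Ye • E8 3 1
    + conj YR • E8 0 4 + YR • E8 4 0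

def M2mat (Yu Yd : ℂ) : M8 :=
  conj Yu • E8 0 2 + conj Yd • E8 1 3 + Yu • E8 2 0 + Yd • E8 3 1

def N1mat (Yν Ye : ℂ) : M4 :=
  conj Yν • E4 0 2 + conj Ye • E4 1 3 + Yν • E4 2 0 + Ye • E4 3 1

def N2mat (Yu Yd : ℂ) : M4 :=
  conj Yu • E4 0 2 + conj Yd • E4 1 3 + Yu • E4 2 0 + Yd • E4 3 1

/-- The internal Dirac operator D_F (one generation). -/
def DF (Yν Ye Yu Yd YR : ℂ) : Module.End ℂ HF :=
  lrOp (M1mat Yν Ye YR) (E4 0 0) + lrOp (M2mat Yu Yd) (1 - E4 0 0)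
    + lrOp (E8 4 4) (N1mat Yν Ye) + lrOp (E8 5 5 + E8 6 6 + E8 7 7) (N2mat Yu Yd)

/-- Generating set of the Clifford algebra: π_F(A_F) ∪ [D_F, π_F(A_F)]. -/
def genSet (Yν Ye Yu Yd YR : ℂ) : Set (Module.End ℂ HF) :=
  piFSet ∪ { T | ∃ l q m, IsQuat q ∧
    T = DF Yν Ye Yu Yd YR * piF l q m - piF l q m * DF Yν Ye Yu Yd YR }

/-- The Clifford algebra Cl_{D_F}(A_F). -/
def ClDF (Yν Ye Yu Yd YR : ℂ) : Subalgebra ℂ (Module.End ℂ HF) :=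
  Algebra.adjoin ℂ (genSet Yν Ye Yu Yd YR)

/-- Grading χ_F. -/
def G1 : M8 := Matrix.diagonal ![1, 1, -1, -1, 0, 0, 0, 0]
def G2 : M8 := Matrix.diagonal ![0, 0, 0, 0, -1, -1, -1, -1]
def G3 : M4 := Matrix.diagonal ![1, 1, -1, -1]

def chiF : Module.End ℂ HF := lmul G1 + lrOp G2 G3

/-- The block-diagonal 8×8 matrix diag(a, λ, m) with blocks of sizes 4, 1, 3. -/
def diagALM (a : M4) (l : ℂ) (m : M3) : M8 :=
  Matrix.of fun i j =>
    if h : (i : ℕ) < 4 ∧ (j : ℕ) < 4 then a ⟨(i : ℕ), h.1⟩ ⟨(j : ℕ), h.2⟩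
    else if i = 4 ∧ j = 4 then l
    else if h : 5 ≤ (i : ℕ) ∧ 5 ≤ (j : ℕ) then
      m ⟨(i : ℕ) - 5, by have := i.isLt; omega⟩ ⟨(j : ℕ) - 5, by have := j.isLt; omega⟩
    else 0

/-- The operator ξ ↦ diag(a,λ,m) ξ e₁₁ + diag(b,λ,m) ξ (1₄ − e₁₁). -/
def Bop (a b : M4) (l : ℂ) (m : M3) : Module.End ℂ HF :=
  lrOp (diagALM a l m) (E4 0 0) + lrOp (diagALM b l m) (1 - E4 0 0)

/-- The algebra B of Lemma (B), as a set of operators. -/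
def BSet : Set (Module.End ℂ HF) := { T | ∃ a b l m, T = Bop a b l m }

/-- The commutant C_F of P(A_F) in M₈(ℂ), as a set. -/
def CFSet : Set M8 := { X | ∃ q11 q12 q21 q22 α β δ : ℂ,
  X = q11 • E8 0 0 + q12 • E8 0 4 + q21 • E8 4 0 + q22 • E8 4 4
    + α • E8 1 1 + β • (E8 2 2 + E8 3 3) + δ • (E8 5 5 + E8 6 6 + E8 7 7) }

/-- The block-diagonal 4×4 matrix diag(λ, m). -/
def diagLM (l : ℂ) (m : M3) : M4 :=
  Matrix.of fun i j =>
    if i = 0 ∧ j = 0 then l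
    else if h : 1 ≤ (i : ℕ) ∧ 1 ≤ (j : ℕ) then
      m ⟨(i : ℕ) - 1, by have := i.isLt; omega⟩ ⟨(j : ℕ) - 1, by have := j.isLt; omega⟩
    else 0

/-- The block-diagonal 4×4 matrix diag(λ, conj λ, q). -/
def diagLLQ (l : ℂ) (q : M2) : M4 :=
  Matrix.of fun i j =>
    if i = 0 ∧ j = 0 then l
    else if i = 1 ∧ j = 1 then conj l
    else if h : 2 ≤ (i : ℕ) ∧ 2 ≤ (j : ℕ) then
      q ⟨(i : ℕ) - 2, by have := i.isLt; omega⟩ ⟨(j : ℕ) - 2, by have := j.isLt; omega⟩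
    else 0

/-- E_u = diag(1₄, 0₄) ∈ M₈(ℂ). -/
def Eu : M8 := Matrix.of fun i j => if i = j ∧ (i : ℕ) < 4 then 1 else 0

/-- E_l = diag(0₄, 1₄) ∈ M₈(ℂ). -/
def El : M8 := Matrix.of fun i j => if i = j ∧ 4 ≤ (i : ℕ) then 1 else 0

/-- The block-diagonal 8×8 matrix diag(b, c) with two 4×4 blocks. -/
def diag44 (b c : M4) : M8 :=
  Matrix.of fun i j =>
    if h : (i : ℕ) < 4 ∧ (j : ℕ) < 4 then b ⟨(i : ℕ), h.1⟩ ⟨(j : ℕ), h.2⟩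
    else if h : 4 ≤ (i : ℕ) ∧ 4 ≤ (j : ℕ) then
      c ⟨(i : ℕ) - 4, by have := i.isLt; omega⟩ ⟨(j : ℕ) - 4, by have := j.isLt; omega⟩
    else 0


lemma mulEu (ξ : HF) (B : M4) (i : Fin 8) (j : Fin 4) :
    (Eu * ξ * B) i j = if (i:ℕ) < 4 then ∑ k, ξ i k * B k j else 0 := by
  rw [Matrix.mul_apply]
  simp only [Matrix.mul_apply, Eu, Matrix.of_apply, ite_and, boole_mul,
    Finset.sum_ite_eq, Finset.mem_univ, if_true]
  by_cases h : (i:ℕ) < 4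
  · simp [h]
  · simp [h]

lemma mulEl (ξ : HF) (B : M4) (i : Fin 8) (j : Fin 4) :
    (El * ξ * B) i j = if 4 ≤ (i:ℕ) then ∑ k, ξ i k * B k j else 0 := by
  rw [Matrix.mul_apply]
  simp only [Matrix.mul_apply, El, Matrix.of_apply, ite_and, boole_mul,
    Finset.sum_ite_eq, Finset.mem_univ, if_true]
  by_cases h : 4 ≤ (i:ℕ)
  · simp [h]
  · simp [h]

lemma isQuat_conjTranspose {q : M2} (h : IsQuat q) : IsQuat qᴴ := by
  obtain ⟨a, b, h1, h2, h3, h4⟩ := h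
  exact ⟨conj a, -b, by simp [Matrix.conjTranspose_apply, h1, h2, h3, h4]⟩

lemma fv8_2 : ((2:Fin 8):ℕ) = 2 := rfl
lemma fv8_3 : ((3:Fin 8):ℕ) = 3 := rfl
lemma fv8_4 : ((4:Fin 8):ℕ) = 4 := rfl
lemma fv8_5 : ((5:Fin 8):ℕ) = 5 := rfl
lemma fv8_6 : ((6:Fin 8):ℕ) = 6 := rfl
lemma fv8_7 : ((7:Fin 8):ℕ) = 7 := rfl
lemma fv4_1 : ((1:Fin 4):ℕ) = 1 := rfl
lemma fv4_2 : ((2:Fin 4):ℕ) = 2 := rfl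
lemma fv4_3 : ((3:Fin 4):ℕ) = 3 := rfl
lemma fv3_1 : ((1:Fin 3):ℕ) = 1 := rfl
lemma fv3_2 : ((2:Fin 3):ℕ) = 2 := rfl
lemma fv2_1 : ((1:Fin 2):ℕ) = 1 := rfl
lemma fm8_2 (h : 2 < 8) : (⟨2, h⟩ : Fin 8) = 2 := rfl
lemma fm8_3 (h : 3 < 8) : (⟨3, h⟩ : Fin 8) = 3 := rfl
lemma fm8_4 (h : 4 < 8) : (⟨4, h⟩ : Fin 8) = 4 := rfl
lemma fm8_5 (h : 5 < 8) : (⟨5, h⟩ : Fin 8) = 5 := rfl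
lemma fm8_6 (h : 6 < 8) : (⟨6, h⟩ : Fin 8) = 6 := rfl
lemma fm8_7 (h : 7 < 8) : (⟨7, h⟩ : Fin 8) = 7 := rfl
lemma fm4_1 (h : 1 < 4) : (⟨1, h⟩ : Fin 4) = 1 := rfl
lemma fm4_2 (h : 2 < 4) : (⟨2, h⟩ : Fin 4) = 2 := rfl
lemma fm4_3 (h : 3 < 4) : (⟨3, h⟩ : Fin 4) = 3 := rfl
lemma fm3_1 (h : 1 < 3) : (⟨1, h⟩ : Fin 3) = 1 := rfl
lemma fm3_2 (h : 2 < 3) : (⟨2, h⟩ : Fin 3) = 2 := rfl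
lemma fm2_1 (h : 1 < 2) : (⟨1, h⟩ : Fin 2) = 1 := rfl

set_option maxHeartbeats 1600000 in
lemma key (l : ℂ) (q : M2) (m : M3) :
    conjByJ (piF l q m) = lrOp Eu (diagLM (conj l) mᴴ) + lrOp El (diagLLQ (conj l) qᴴ) := by
  apply LinearMap.ext; intro ξ
  show JF (Pmat l q m * JF ξ) = Eu * ξ * diagLM (conj l) mᴴ + El * ξ * diagLLQ (conj l) qᴴ
  funext i j
  rw [Matrix.add_apply, mulEu, mulEl]
  fin_cases i <;> fin_cases j <;>
    (simp (config := { decide := true }) [JF, Pmat, diagLM, diagLLQ, Matrix.mul_apply,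
      Fin.sum_univ_eight, Fin.sum_univ_four, Matrix.conjTranspose_apply,
      fv8_2, fv8_3, fv8_4, fv8_5, fv8_6, fv8_7, fv4_1, fv4_2, fv4_3, fv3_1, fv3_2, fv2_1,
      fm8_2, fm8_3, fm8_4, fm8_5, fm8_6, fm8_7,
      fm4_1, fm4_2, fm4_3, fm3_1, fm3_2, fm2_1]; try ring)

/-- description of J_F π_F(A_F) J_F. -/
theorem stmt_4 :
    conjByJ '' piFSet
      = { T : Module.End ℂ HF | ∃ l q m, IsQuat q ∧
          T = lrOp Eu (diagLM l m) + lrOp El (diagLLQ l q) } := by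
  ext T
  simp only [Set.mem_image, piFSet, Set.mem_setOf_eq]
  constructor
  · rintro ⟨T', ⟨l, q, m, hq, rfl⟩, rfl⟩
    exact ⟨conj l, qᴴ, mᴴ, isQuat_conjTranspose hq, key l q m⟩
  · rintro ⟨l, q, m, hq, rfl⟩
    refine ⟨piF (conj l) qᴴ mᴴ, ⟨conj l, qᴴ, mᴴ, isQuat_conjTranspose hq, rfl⟩, ?_⟩
    rw [key]
    simp


end
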